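/- Let L be a Lie algebra over a field of characteristic zero, let U(L) be its universal enveloping algebra, and let x, y ∈ L. Then: (i) if ⁅x,y⁆ = 0, then for all non-negative integers a, b one has (x^a/a!)·(y^b/b!) = (y^b/b!)·(x^a/a!) in U(L); (ii) if ⁅x,⁅x,y⁆⁆ = 0 and ⁅y,⁅y,x⁆⁆ = 0, then for all non-negative integers a, b, c one has, in U(L), (−1)^(a+b+c) · (x^a/a!) · (⁅x,y⁆^c/c!) · (y^b/b!) = Σ_{p=0}^{min(a,b)} binom(c+p, p) · (−1)^c · (−1)^(a+b+c−p) · (y^(b−p)/(b−p)!) · (⁅y,x⁆^(c+p)/(c+p)!) · (x^(a−p)/(a−p)!). -/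

import Mathlib

open UniversalEnvelopingAlgebra Finset

section aux
variable {A : Type*} [Ring A]

lemma pbw_aux0 (X Y Z : A) (h : X * Y = Y * X + Z) (hZY : Z * Y = Y * Z) :
    ∀ m : ℕ, X * Y ^ m = Y ^ m * X + m • (Y ^ (m - 1) * Z) := by
  intro m
  induction m with
  | zero => simp
  | succ m ih =>
    rw [pow_succ', ← mul_assoc, h]
    rw [add_mul, mul_assoc, ih]
    cases m with
    | zero => simp [h]
    | succ n =>
      have hZYm : Z * Y ^ (n+1) = Y ^ (n+1) * Z := (Commute.pow_right hZY (n+1))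
      simp only [Nat.succ_sub_one]
      rw [mul_add, ← mul_assoc, ← pow_succ', hZYm, mul_smul_comm, ← mul_assoc, ← pow_succ',
        succ_nsmul ((Y:A)^(n+1) * Z) (n+1), add_assoc]

lemma pbw_natkey (a b p : ℕ) :
    a.choose (p+1) * b.choose (p+1) * (p+1).factorial
      + a.choose p * b.choose p * p.factorial * (b - p)
    = (a+1).choose (p+1) * b.choose (p+1) * (p+1).factorial := by
  have e0 : a.choose p * b.choose p * p.factorial * (b - p)
      = a.choose p * (b.choose p * (b - p)) * p.factorial := by ring
  rw [e0, ← Nat.choose_succ_right_eq, Nat.choose_succ_succ, Nat.factorial_succ]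
  ring

lemma pbw_aux1 (X Y Z : A) (h : X * Y = Y * X + Z) (hZY : Z * Y = Y * Z)
    (hZX : Z * X = X * Z) :
    ∀ a b : ℕ, X ^ a * Y ^ b =
      ∑ p ∈ Finset.range (a + 1),
        (a.choose p * b.choose p * p.factorial) • (Y ^ (b - p) * Z ^ p * X ^ (a - p)) := by
  intro a b
  induction a with
  | zero => simp
  | succ a ih =>
    have hXZp : ∀ p : ℕ, X * Z ^ p = Z ^ p * X := fun p => (Commute.pow_right hZX.symm p)
    have step : ∀ (n m p q : ℕ), X * (n • (Y ^ m * Z ^ p * X ^ q))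
        = n • (Y ^ m * Z ^ p * X ^ (q+1)) + (n * m) • (Y ^ (m-1) * Z ^ (p+1) * X ^ q) := by
      intro n m p q
      rw [mul_smul_comm, ← mul_assoc, ← mul_assoc, pbw_aux0 X Y Z h hZY m, add_mul, add_mul,
        smul_add, smul_mul_assoc, smul_mul_assoc, smul_smul]
      congr 1
      · congr 1
        rw [mul_assoc (Y^m) X (Z^p), hXZp p, ← mul_assoc, mul_assoc _ X (X^q), ← pow_succ']
      · congr 1
        rw [mul_assoc (Y^(m-1)) Z (Z^p), ← pow_succ']
    rw [pow_succ', mul_assoc, ih, Finset.mul_sum]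
    have key : ∀ p ∈ Finset.range (a+1),
        X * ((a.choose p * b.choose p * p.factorial) • (Y ^ (b-p) * Z ^ p * X ^ (a-p)))
        = (a.choose p * b.choose p * p.factorial) • (Y ^ (b-p) * Z ^ p * X ^ (a+1-p))
          + (a.choose p * b.choose p * p.factorial * (b-p)) •
              (Y ^ (b-(p+1)) * Z ^ (p+1) * X ^ (a+1-(p+1))) := by
      intro p hp
      simp only [Finset.mem_range] at hp
      rw [step]
      have h1 : a - p + 1 = a + 1 - p := by omega
      have h2 : b - p - 1 = b - (p+1) := by omega
      have h3 : a - p = a + 1 - (p+1) := by omega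
      rw [h1, h2, h3]
    rw [Finset.sum_congr rfl key, Finset.sum_add_distrib]
    have ext : ∑ p ∈ Finset.range (a+1),
        (a.choose p * b.choose p * p.factorial) • (Y ^ (b-p) * Z ^ p * X ^ (a+1-p))
        = ∑ p ∈ Finset.range (a+2),
        (a.choose p * b.choose p * p.factorial) • (Y ^ (b-p) * Z ^ p * X ^ (a+1-p)) := by
      rw [Finset.sum_range_succ (n := a+1)]
      simp [Nat.choose_succ_self]
    rw [ext, Finset.sum_range_succ' _ (a+1),
      Finset.sum_range_succ' (fun p => ((a+1).choose p * b.choose p * p.factorial) •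
        (Y ^ (b-p) * Z ^ p * X ^ (a+1-p))) (a+1)]
    simp only [Nat.choose_zero_right, Nat.choose_self]
    rw [add_right_comm, ← Finset.sum_add_distrib]
    congr 1
    refine Finset.sum_congr rfl fun p hp => ?_
    rw [← add_smul, pbw_natkey a b p]

end aux

/-- elementary transformations of PBW monomials (Lemma 6.1 of the paper).
`(i)`: if `⁅x,y⁆ = 0` then divided powers of `x` and `y` commute in `U(L)`.
`(ii)`: if `⁅x,⁅x,y⁆⁆ = 0` and `⁅y,⁅y,x⁆⁆ = 0` (the `A₂` configuration), then
`(−1)^(a+b+c) (x^a/a!) (⁅x,y⁆^c/c!) (y^b/b!)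
  = Σ_{p=0}^{min a b} C(c+p,p) (−1)^c (−1)^(a+b+c−p) (y^(b−p)/(b−p)!) (⁅y,x⁆^(c+p)/(c+p)!) (x^(a−p)/(a−p)!)`. -/
theorem pbw_elementary_transformations
    {K : Type*} [Field K] [CharZero K]
    {L : Type*} [LieRing L] [LieAlgebra K L] (x y : L) :
    (⁅x, y⁆ = 0 → ∀ a b : ℕ,
      (((a.factorial : K)⁻¹ • (ι K x : UniversalEnvelopingAlgebra K L) ^ a) *
        ((b.factorial : K)⁻¹ • (ι K y : UniversalEnvelopingAlgebra K L) ^ b))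
        = (((b.factorial : K)⁻¹ • (ι K y : UniversalEnvelopingAlgebra K L) ^ b) *
           ((a.factorial : K)⁻¹ • (ι K x : UniversalEnvelopingAlgebra K L) ^ a))) ∧
    (⁅x, ⁅x, y⁆⁆ = 0 → ⁅y, ⁅y, x⁆⁆ = 0 → ∀ a b c : ℕ,
      ((-1 : K) ^ (a + b + c)) •
        (((a.factorial : K)⁻¹ • (ι K x : UniversalEnvelopingAlgebra K L) ^ a) *
         ((c.factorial : K)⁻¹ • (ι K ⁅x, y⁆ : UniversalEnvelopingAlgebra K L) ^ c) *
         ((b.factorial : K)⁻¹ • (ι K y : UniversalEnvelopingAlgebra K L) ^ b))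
        = ∑ p ∈ Finset.range (min a b + 1),
            ((((c + p).choose p : K) * (-1 : K) ^ c * (-1 : K) ^ (a + b + c - p)) •
              ((((b - p).factorial : K)⁻¹ • (ι K y : UniversalEnvelopingAlgebra K L) ^ (b - p)) *
               (((c + p).factorial : K)⁻¹ • (ι K ⁅y, x⁆ : UniversalEnvelopingAlgebra K L) ^ (c + p)) *
               (((a - p).factorial : K)⁻¹ • (ι K x : UniversalEnvelopingAlgebra K L) ^ (a - p))))) := by
  have hbr : ∀ u v : L, (ι K ⁅u,v⁆ : UniversalEnvelopingAlgebra K L)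
      = ι K u * ι K v - ι K v * ι K u := by
    intro u v
    letI : LieRing (UniversalEnvelopingAlgebra K L) := LieRing.ofAssociativeRing
    rw [LieHom.map_lie, Ring.lie_def]
  constructor
  · intro hxy a b
    have hc : (ι K x : UniversalEnvelopingAlgebra K L) * ι K y = ι K y * ι K x := by
      have h := hbr x y
      rw [hxy, map_zero] at h
      exact sub_eq_zero.mp h.symm
    have hcp : (ι K x : UniversalEnvelopingAlgebra K L) ^ a * (ι K y) ^ b
        = (ι K y) ^ b * (ι K x) ^ a := Commute.pow_pow hc a b
    rw [smul_mul_assoc, mul_smul_comm, smul_mul_assoc, mul_smul_comm, smul_smul, smul_smul,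
      mul_comm ((b.factorial : K)⁻¹) ((a.factorial : K)⁻¹), hcp]
  · intro h1 h2 a b c
    set X : UniversalEnvelopingAlgebra K L := ι K x with hX
    set Y : UniversalEnvelopingAlgebra K L := ι K y with hY
    set Z : UniversalEnvelopingAlgebra K L := ι K ⁅x, y⁆ with hZ
    have hXY : X * Y = Y * X + Z := by
      have h := hbr x y
      rw [← hX, ← hY, ← hZ] at h
      rw [h]; abel
    have hZX : Z * X = X * Z := by
      have h := hbr x ⁅x, y⁆
      rw [h1, map_zero, ← hX, ← hZ] at h
      exact (sub_eq_zero.mp h.symm).symm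
    have hyx : (ι K ⁅y, x⁆ : UniversalEnvelopingAlgebra K L) = -Z := by
      rw [(lie_skew y x).symm, map_neg, hZ]
    have hZY : Z * Y = Y * Z := by
      have h := hbr y ⁅y, x⁆
      rw [h2, map_zero, hyx, ← hY] at h
      have h' := sub_eq_zero.mp h.symm
      rw [mul_neg, neg_mul, neg_inj] at h'
      exact h'.symm
    have hcomZX : ∀ cc aa : ℕ, Z ^ cc * X ^ aa = X ^ aa * Z ^ cc :=
      fun cc aa => Commute.pow_pow hZX cc aa
    have hcomZY : ∀ cc bb : ℕ, Z ^ cc * Y ^ bb = Y ^ bb * Z ^ cc :=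
      fun cc bb => Commute.pow_pow hZY cc bb
    have key := pbw_aux1 X Y Z hXY hZY hZX a b
    have inner : ∀ m p q : ℕ, Z ^ c * (Y ^ m * Z ^ p * X ^ q) = Y ^ m * Z ^ (c+p) * X ^ q := by
      intro m p q
      rw [mul_assoc (Y^m) (Z^p) (X^q), ← mul_assoc, hcomZY c m,
        mul_assoc (Y^m), ← mul_assoc (Z^c), ← pow_add, ← mul_assoc]
    have lhs_eq : ((-1 : K) ^ (a + b + c)) •
        (((a.factorial : K)⁻¹ • X ^ a) * ((c.factorial : K)⁻¹ • Z ^ c) *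
         ((b.factorial : K)⁻¹ • Y ^ b))
        = ∑ p ∈ Finset.range (a+1),
          (((-1 : K) ^ (a + b + c) * ((a.factorial : K)⁻¹ * ((c.factorial : K)⁻¹ *
            ((b.factorial : K)⁻¹ * ((a.choose p * b.choose p * p.factorial : ℕ) : K))))) •
            (Y ^ (b-p) * Z ^ (c+p) * X ^ (a-p))) := by
      simp only [smul_mul_assoc, mul_smul_comm, smul_smul]
      rw [show X^a * Z^c * Y^b = Z^c * (X^a * Y^b) by rw [← hcomZX c a, mul_assoc],
        key, Finset.mul_sum, Finset.smul_sum]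
      refine Finset.sum_congr rfl fun p hp => ?_
      rw [mul_smul_comm, inner, ← Nat.cast_smul_eq_nsmul K, smul_smul]
      congr 1
      ring
    rw [lhs_eq]
    rw [show ∑ p ∈ Finset.range (a+1),
          (((-1 : K) ^ (a + b + c) * ((a.factorial : K)⁻¹ * ((c.factorial : K)⁻¹ *
            ((b.factorial : K)⁻¹ * ((a.choose p * b.choose p * p.factorial : ℕ) : K))))) •
            (Y ^ (b-p) * Z ^ (c+p) * X ^ (a-p)))
        = ∑ p ∈ Finset.range (min a b + 1),
          (((-1 : K) ^ (a + b + c) * ((a.factorial : K)⁻¹ * ((c.factorial : K)⁻¹ *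
            ((b.factorial : K)⁻¹ * ((a.choose p * b.choose p * p.factorial : ℕ) : K))))) •
            (Y ^ (b-p) * Z ^ (c+p) * X ^ (a-p)))
        from (Finset.sum_subset (Finset.range_subset_range.mpr (by omega))
          (fun p hp hnp => by
            simp only [Finset.mem_range] at hp hnp
            have : b < p := by omega
            simp [Nat.choose_eq_zero_of_lt this])).symm]
    refine Finset.sum_congr rfl fun p hp => ?_
    simp only [Finset.mem_range] at hp
    have hpa : p ≤ a := by omega
    have hpb : p ≤ b := by omega
    rw [hyx, ← neg_one_smul K Z, smul_pow]
    simp only [smul_smul, smul_mul_assoc, mul_smul_comm]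
    congr 1
    have e1 : ((a.choose p : K)) * (p.factorial : K) * ((a-p).factorial : K) = (a.factorial : K) := by
      exact_mod_cast congrArg (Nat.cast (R := K)) (Nat.choose_mul_factorial_mul_factorial hpa)
    have e2 : ((b.choose p : K)) * (p.factorial : K) * ((b-p).factorial : K) = (b.factorial : K) := by
      exact_mod_cast congrArg (Nat.cast (R := K)) (Nat.choose_mul_factorial_mul_factorial hpb)
    have e3 : (((c+p).choose p : K)) * (c.factorial : K) * (p.factorial : K)
        = ((c+p).factorial : K) := by
      exact_mod_cast congrArg (Nat.cast (R := K)) (Nat.add_choose_mul_factorial_mul_factorial c p)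
    have hs2 : (-1:K)^c * (-1)^(a+b+c-p) * (-1)^(c+p) = (-1)^(a+b+c) := by
      calc (-1:K)^c * (-1)^(a+b+c-p) * (-1)^(c+p)
          = (-1)^(c + (a+b+c-p) + (c+p)) := by rw [← pow_add, ← pow_add]
        _ = (-1)^((a+b+c) + 2*c) := by congr 1; omega
        _ = (-1:K)^(a+b+c) := by rw [pow_add, pow_mul, neg_one_sq, one_pow, mul_one]
    have nCa : ((a.choose p : K)) ≠ 0 := Nat.cast_ne_zero.mpr (Nat.choose_pos hpa).ne'
    have nCb : ((b.choose p : K)) ≠ 0 := Nat.cast_ne_zero.mpr (Nat.choose_pos hpb).ne'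
    have nC3 : (((c+p).choose p : K)) ≠ 0 :=
      Nat.cast_ne_zero.mpr (Nat.choose_pos (Nat.le_add_left p c)).ne'
    have nf : ∀ n : ℕ, ((n.factorial : K)) ≠ 0 :=
      fun n => Nat.cast_ne_zero.mpr n.factorial_ne_zero
    have M : ((a.factorial : K))⁻¹ * (((c.factorial : K))⁻¹ * (((b.factorial : K))⁻¹ *
          ((a.choose p * b.choose p * p.factorial : ℕ) : K)))
        = (((c+p).choose p : K)) * ((((a-p).factorial : K))⁻¹ *
            ((((c+p).factorial : K))⁻¹ * (((b-p).factorial : K))⁻¹)) := by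
      have natM : a.choose p * b.choose p * p.factorial *
            ((a-p).factorial * ((c+p).factorial * (b-p).factorial))
          = (c+p).choose p * (a.factorial * (c.factorial * b.factorial)) := by
        conv_rhs => rw [← Nat.choose_mul_factorial_mul_factorial hpa,
          ← Nat.choose_mul_factorial_mul_factorial hpb]
        rw [← Nat.add_choose_mul_factorial_mul_factorial c p]
        ring
      have M' : ((a.choose p * b.choose p * p.factorial : ℕ) : K) *
            (((a-p).factorial : K) * (((c+p).factorial : K) * ((b-p).factorial : K)))
          = (((c+p).choose p : K)) * ((a.factorial : K) * ((c.factorial : K) * (b.factorial : K))) := by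
        exact_mod_cast congrArg (Nat.cast (R := K)) natM
      field_simp [nf a, nf b, nf c, nf p, nf (a-p), nf (b-p), nf (c+p)]
      push_cast at M' ⊢
      linear_combination M'
    linear_combination ((-1:K)^(a+b+c)) * M -
      ((((c+p).choose p : K)) * (((a-p).factorial : K))⁻¹ * (((c+p).factorial : K))⁻¹ *
        (((b-p).factorial : K))⁻¹) * hs2
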